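/- arXiv:1301.4643 — 3 statements merged into one kernel-verified Lean document; each statement's English description precedes it below -/
import Mathlib

section
/- If M = N (equal cardinalities, same codes used in the construction), then the constant-rank code C constructed from constant-dimension codes M and N additionally has minimum rank distance at most (1/2)·min{d_{S,M}, d_{S,N}} + r. -/
open Matrix
open scoped Classical

/-- The subspace distance `d_S(U,V) = dim(U+V) - dim(U ∩ V)`. -/
noncomputable def subspaceDist {F : Type*} [Field F] {M : Type*} [AddCommGroup M] [Module F M]
    (U V : Submodule F M) : ℕ :=
  Module.finrank F ↥(U ⊔ V) - Module.finrank F ↥(U ⊓ V)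

/-- The row space of a matrix: the span of its rows. -/
noncomputable def rowSpace {F : Type*} [Field F] {m : ℕ} {ι : Type*}
    (X : Matrix (Fin m) ι F) : Submodule F (ι → F) :=
  Submodule.span F (Set.range fun i => X i)

/-- The column space of a matrix: the span of its columns. -/
noncomputable def colSpace {F : Type*} [Field F] {m n : ℕ}
    (X : Matrix (Fin m) (Fin n) F) : Submodule F (Fin m → F) :=
  rowSpace Xᵀ

lemma rank_eq_finrank_colSpace {F : Type*} [Field F] {m n : ℕ}
    (A : Matrix (Fin m) (Fin n) F) : A.rank = Module.finrank F (colSpace A) := by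
  rw [colSpace, rowSpace]
  exact A.rank_eq_finrank_span_cols

lemma colSpace_sub_le {F : Type*} [Field F] {m n : ℕ} (A B : Matrix (Fin m) (Fin n) F) :
    colSpace (A - B) ≤ colSpace A ⊔ colSpace B := by
  rw [colSpace, rowSpace, Submodule.span_le]
  rintro x ⟨j, rfl⟩
  have hA : Aᵀ j ∈ colSpace A ⊔ colSpace B :=
    le_sup_left (α := Submodule F (Fin m → F))
      (Submodule.subset_span ⟨j, rfl⟩)
  have hB : Bᵀ j ∈ colSpace A ⊔ colSpace B :=
    le_sup_right (α := Submodule F (Fin m → F))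
      (Submodule.subset_span ⟨j, rfl⟩)
  show (A - B)ᵀ j ∈ (colSpace A ⊔ colSpace B : Submodule F (Fin m → F))
  have : (A - B)ᵀ j = Aᵀ j - Bᵀ j := rfl
  rw [this]
  exact Submodule.sub_mem _ hA hB

lemma rank_sub_le_finrank_sup {F : Type*} [Field F] {m n : ℕ}
    (A B : Matrix (Fin m) (Fin n) F) :
    (A - B).rank ≤ Module.finrank F ↥(colSpace A ⊔ colSpace B) := by
  rw [rank_eq_finrank_colSpace]
  exact Submodule.finrank_mono (colSpace_sub_le A B)

lemma finrank_sup_eq_half {F : Type*} [Field F] {m r : ℕ}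
    (U V : Submodule F (Fin m → F)) (hU : Module.finrank F U = r)
    (hV : Module.finrank F V = r) :
    (Module.finrank F ↥(U ⊔ V) : ℚ) = (subspaceDist U V : ℚ) / 2 + r := by
  have hsum := Submodule.finrank_sup_add_finrank_inf_eq U V
  rw [hU, hV] at hsum
  have hle : Module.finrank F ↥(U ⊓ V) ≤ Module.finrank F ↥(U ⊔ V) :=
    Submodule.finrank_mono (le_trans inf_le_left le_sup_left)
  rw [subspaceDist]
  push_cast [Nat.cast_sub hle]
  have : (Module.finrank F ↥(U ⊔ V) : ℚ) + Module.finrank F ↥(U ⊓ V) = r + r := by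
    exact_mod_cast congrArg (Nat.cast : ℕ → ℚ) hsum
  linarith

lemma rowSpace_eq_colSpace_transpose {F : Type*} [Field F] {m n : ℕ}
    (A : Matrix (Fin m) (Fin n) F) : rowSpace A = colSpace Aᵀ := by
  rw [colSpace, Matrix.transpose_transpose]

/-- If the two constant-dimension codes used in the constant-rank code construction have
equal cardinality (`|M| = |N|`), then the constructed constant-rank code `C` (matrices of
rank `r` whose column spaces exhaust `M` and whose row spaces exhaust `N`, injectively)
has minimum rank distance at most `½ min{d_{S,M}, d_{S,N}} + r`. -/
theorem constant_rank_code_min_dist_upper {F : Type*} [Field F] [Fintype F] {m n r : ℕ}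
    (M : Finset (Submodule F (Fin m → F))) (N : Finset (Submodule F (Fin n → F)))
    (dSM dSN : ℕ)
    (C : Finset (Matrix (Fin m) (Fin n) F))
    (hcard : M.card = N.card) (hC2 : 2 ≤ C.card)
    (hrank : ∀ A ∈ C, A.rank = r)
    (hcolInj : Set.InjOn (fun A : Matrix (Fin m) (Fin n) F => colSpace A) ↑C)
    (hcolIm : C.image (fun A => colSpace A) = M)
    (hrowInj : Set.InjOn (fun A : Matrix (Fin m) (Fin n) F => rowSpace A) ↑C)
    (hrowIm : C.image (fun A => rowSpace A) = N)
    (hMdist : ∀ U ∈ M, ∀ V ∈ M, U ≠ V → dSM ≤ subspaceDist U V)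
    (hMmin : ∃ U ∈ M, ∃ V ∈ M, U ≠ V ∧ subspaceDist U V = dSM)
    (hNdist : ∀ U ∈ N, ∀ V ∈ N, U ≠ V → dSN ≤ subspaceDist U V)
    (hNmin : ∃ U ∈ N, ∃ V ∈ N, U ≠ V ∧ subspaceDist U V = dSN) :
    ∃ A ∈ C, ∃ B ∈ C, A ≠ B ∧
      (((A - B) : Matrix (Fin m) (Fin n) F).rank : ℚ) ≤ (min dSM dSN : ℚ) / 2 + r := by
  rcases le_total dSM dSN with hmin | hmin
  · -- use the column-space code M
    obtain ⟨U, hU, V, hV, hUV, hdist⟩ := hMmin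
    rw [← hcolIm] at hU hV
    obtain ⟨A, hA, rfl⟩ := Finset.mem_image.mp hU
    obtain ⟨B, hB, rfl⟩ := Finset.mem_image.mp hV
    refine ⟨A, hA, B, hB, fun h => hUV (by rw [h]), ?_⟩
    rw [min_eq_left (show (dSM:ℚ) ≤ (dSN:ℚ) by exact_mod_cast hmin)]
    have h1 : ((A - B).rank : ℚ) ≤ (Module.finrank F ↥(colSpace A ⊔ colSpace B) : ℚ) := by
      exact_mod_cast rank_sub_le_finrank_sup A B
    have hfA : Module.finrank F (colSpace A) = r := by
      rw [← rank_eq_finrank_colSpace]; exact hrank A hA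
    have hfB : Module.finrank F (colSpace B) = r := by
      rw [← rank_eq_finrank_colSpace]; exact hrank B hB
    have h2 : (Module.finrank F ↥(colSpace A ⊔ colSpace B) : ℚ)
        = (dSM : ℚ) / 2 + r := by
      rw [finrank_sup_eq_half (colSpace A) (colSpace B) hfA hfB, hdist]
    linarith
  · -- use the row-space code N
    obtain ⟨U, hU, V, hV, hUV, hdist⟩ := hNmin
    rw [← hrowIm] at hU hV
    obtain ⟨A, hA, rfl⟩ := Finset.mem_image.mp hU
    obtain ⟨B, hB, rfl⟩ := Finset.mem_image.mp hV
    refine ⟨A, hA, B, hB, fun h => hUV (by rw [h]), ?_⟩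
    rw [min_eq_right (show (dSN:ℚ) ≤ (dSM:ℚ) by exact_mod_cast hmin)]
    have hrkt : (A - B).rank = (Aᵀ - Bᵀ).rank := by
      rw [← Matrix.transpose_sub, Matrix.rank_transpose]
    have h1 : ((A - B).rank : ℚ) ≤ (Module.finrank F ↥(colSpace Aᵀ ⊔ colSpace Bᵀ) : ℚ) := by
      rw [hrkt]; exact_mod_cast rank_sub_le_finrank_sup Aᵀ Bᵀ
    have hfA : Module.finrank F (colSpace Aᵀ) = r := by
      rw [← rank_eq_finrank_colSpace, Matrix.rank_transpose]; exact hrank A hA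
    have hfB : Module.finrank F (colSpace Bᵀ) = r := by
      rw [← rank_eq_finrank_colSpace, Matrix.rank_transpose]; exact hrank B hB
    have h2 : (Module.finrank F ↥(colSpace Aᵀ ⊔ colSpace Bᵀ) : ℚ)
        = (dSN : ℚ) / 2 + r := by
      rw [finrank_sup_eq_half (colSpace Aᵀ) (colSpace Bᵀ) hfA hfB,
        ← rowSpace_eq_colSpace_transpose, ← rowSpace_eq_colSpace_transpose, hdist]
    linarith
end

section
/- Lifting of MRD codes: Let d be even, n/2 ≥ τ ≥ d/2, and let C be a linear MRD code over F_{q^{n−τ}} of length τ, dimension τ − d/2 + 1, and minimum rank distance d/2. Then the lifting I(Cᵀ) = { Rowspace([I_τ | Cᵀ]) : C ∈ C } is a constant-dimension code of τ-dimensional subspaces of F_q^n with cardinality q^{(n−τ)(τ−d/2+1)} and minimum subspace distance d. -/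
open Matrix
open scoped Classical

section Aux
variable {F : Type*} [Field F] {τ m : ℕ}

noncomputable def liftMap (X : Matrix (Fin m) (Fin τ) F) :
    (Fin τ → F) →ₗ[F] (Fin τ ⊕ Fin m → F) :=
  (Matrix.fromCols (1 : Matrix (Fin τ) (Fin τ) F) Xᵀ).vecMulLinear

lemma liftMap_apply (X : Matrix (Fin m) (Fin τ) F) (a : Fin τ → F) :
    liftMap X a = Sum.elim a (X *ᵥ a) := by
  simp [liftMap, Matrix.vecMul_fromCols, Matrix.vecMul_one, Matrix.vecMul_transpose]

lemma rowSpace_eq_range (X : Matrix (Fin m) (Fin τ) F) :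
    rowSpace (Matrix.fromCols (1 : Matrix (Fin τ) (Fin τ) F) Xᵀ)
      = LinearMap.range (liftMap X) := by
  rw [liftMap, range_vecMulLinear, rowSpace]
  rfl

lemma liftMap_injective (X : Matrix (Fin m) (Fin τ) F) :
    Function.Injective (liftMap X) := by
  intro a b hab
  rw [liftMap_apply, liftMap_apply] at hab
  funext j
  exact congrFun hab (Sum.inl j)

lemma finrank_range_liftMap (X : Matrix (Fin m) (Fin τ) F) :
    Module.finrank F ↥(LinearMap.range (liftMap X)) = τ := by
  rw [LinearMap.finrank_range_of_inj (liftMap_injective X), Module.finrank_fin_fun]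

lemma lift_inj {X Y : Matrix (Fin m) (Fin τ) F}
    (h : LinearMap.range (liftMap X) = LinearMap.range (liftMap Y)) : X = Y := by
  ext i j
  have hm : liftMap X (Pi.single j 1) ∈ LinearMap.range (liftMap Y) := by
    rw [← h]; exact LinearMap.mem_range_self _ _
  obtain ⟨b, hb⟩ := hm
  rw [liftMap_apply, liftMap_apply] at hb
  have hb1 : b = Pi.single j 1 := funext fun k => congrFun hb (Sum.inl k)
  subst hb1
  have hb2 : (Y *ᵥ Pi.single j 1) i = (X *ᵥ Pi.single j 1) i := congrFun hb (Sum.inr i)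
  simpa [Matrix.mulVec_single] using hb2.symm

lemma finrank_inf (X Y : Matrix (Fin m) (Fin τ) F) :
    Module.finrank F ↥(LinearMap.range (liftMap X) ⊓ LinearMap.range (liftMap Y))
      = τ - (X - Y).rank := by
  have key : Module.finrank F ↥(LinearMap.ker (X - Y).mulVecLin)
      = Module.finrank F ↥(LinearMap.range (liftMap X) ⊓ LinearMap.range (liftMap Y)) := by
    apply LinearEquiv.finrank_eq
    refine LinearEquiv.ofBijective
      (LinearMap.codRestrict _ ((liftMap X).comp (Submodule.subtype _)) ?_) ⟨?_, ?_⟩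
    · rintro ⟨a, ha⟩
      simp only [LinearMap.mem_ker, Matrix.mulVecLin_apply, Matrix.sub_mulVec,
        sub_eq_zero] at ha
      constructor
      · exact LinearMap.mem_range_self _ _
      · refine ⟨a, ?_⟩
        simp only [LinearMap.coe_comp, Submodule.coe_subtype, Function.comp_apply]
        rw [liftMap_apply, liftMap_apply, ha]
    · intro a b hab
      have := congrArg Subtype.val hab
      simp only [LinearMap.codRestrict_apply, LinearMap.coe_comp, Submodule.coe_subtype,
        Function.comp_apply] at this
      exact Subtype.ext (liftMap_injective X this)
    · rintro ⟨v, hvX, hvY⟩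
      obtain ⟨a, ha⟩ := hvX
      obtain ⟨b, hb⟩ := hvY
      rw [liftMap_apply] at ha hb
      have hab : b = a := by
        funext k
        exact congrFun (hb.trans ha.symm) (Sum.inl k)
      subst hab
      have hXY : X *ᵥ b = Y *ᵥ b := by
        funext i
        exact congrFun (ha.trans hb.symm) (Sum.inr i)
      refine ⟨⟨b, ?_⟩, Subtype.ext ?_⟩
      · simp only [LinearMap.mem_ker, Matrix.mulVecLin_apply, Matrix.sub_mulVec, sub_eq_zero]
        exact hXY
      · simpa [liftMap_apply] using ha
  rw [← key]
  have hrn := LinearMap.finrank_range_add_finrank_ker (X - Y).mulVecLin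
  rw [Module.finrank_fin_fun] at hrn
  have : (X - Y).rank = Module.finrank F ↥(LinearMap.range (X - Y).mulVecLin) := rfl
  omega

lemma subspaceDist_eq (X Y : Matrix (Fin m) (Fin τ) F)
    (hr : (X - Y).rank ≤ τ) :
    subspaceDist (LinearMap.range (liftMap X)) (LinearMap.range (liftMap Y))
      = 2 * (X - Y).rank := by
  have hinf := finrank_inf X Y
  have hsup := Submodule.finrank_sup_add_finrank_inf_eq
    (LinearMap.range (liftMap X)) (LinearMap.range (liftMap Y))
  rw [hinf, finrank_range_liftMap, finrank_range_liftMap] at hsup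
  rw [subspaceDist, hinf]
  omega

end Aux

/-- Lifting of an MRD code: let `d` be even, `d/2 ≤ τ ≤ n - τ`, and let `C` be a set of
`(n-τ) × τ` matrices over `F_q` representing a linear MRD code over `F_{q^{n-τ}}` of length `τ`,
dimension `τ - d/2 + 1` (so `|C| = q^{(n-τ)(τ-d/2+1)}`) and minimum rank distance exactly `d/2`.
Then the lifting `{ Rowspace [I_τ | Cᵀ] : C ∈ C }` is a constant-dimension code of
`τ`-dimensional subspaces of `F_q^n`, of the same cardinality `q^{(n-τ)(τ-d/2+1)}`, with
minimum subspace distance exactly `d`. -/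
theorem lifted_MRD_code {F : Type*} [Field F] [Fintype F] {n τ d : ℕ}
    (hd : Even d) (hτd : d / 2 ≤ τ) (hτn : τ ≤ n - τ) (hd0 : 0 < d)
    (C : Finset (Matrix (Fin (n - τ)) (Fin τ) F))
    (hcard : C.card = (Fintype.card F) ^ ((n - τ) * (τ - d / 2 + 1)))
    (hdist : ∀ X ∈ C, ∀ Y ∈ C, X ≠ Y → d / 2 ≤ ((X - Y) : Matrix (Fin (n - τ)) (Fin τ) F).rank)
    (hmin : ∃ X ∈ C, ∃ Y ∈ C, X ≠ Y ∧ ((X - Y) : Matrix (Fin (n - τ)) (Fin τ) F).rank = d / 2) :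
    (C.image (fun X => rowSpace (Matrix.fromCols (1 : Matrix (Fin τ) (Fin τ) F) Xᵀ))).card
        = (Fintype.card F) ^ ((n - τ) * (τ - d / 2 + 1)) ∧
    (∀ U ∈ C.image (fun X => rowSpace (Matrix.fromCols (1 : Matrix (Fin τ) (Fin τ) F) Xᵀ)),
        Module.finrank F ↥U = τ) ∧
    (∀ U ∈ C.image (fun X => rowSpace (Matrix.fromCols (1 : Matrix (Fin τ) (Fin τ) F) Xᵀ)),
      ∀ V ∈ C.image (fun X => rowSpace (Matrix.fromCols (1 : Matrix (Fin τ) (Fin τ) F) Xᵀ)),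
        U ≠ V → d ≤ subspaceDist U V) ∧
    (∃ U ∈ C.image (fun X => rowSpace (Matrix.fromCols (1 : Matrix (Fin τ) (Fin τ) F) Xᵀ)),
     ∃ V ∈ C.image (fun X => rowSpace (Matrix.fromCols (1 : Matrix (Fin τ) (Fin τ) F) Xᵀ)),
        U ≠ V ∧ subspaceDist U V = d) := by
  have hinj : Set.InjOn
      (fun X => rowSpace (Matrix.fromCols (1 : Matrix (Fin τ) (Fin τ) F) Xᵀ))
      (C : Set (Matrix (Fin (n - τ)) (Fin τ) F)) := by
    intro X _ Y _ h
    simp only [rowSpace_eq_range] at h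
    exact lift_inj h
  have h2d : 2 * (d / 2) = d := by
    obtain ⟨c, hc⟩ := hd; omega
  refine ⟨?_, ?_, ?_, ?_⟩
  · rw [Finset.card_image_of_injOn hinj, hcard]
  · intro U hU
    simp only [Finset.mem_image] at hU
    obtain ⟨X, _, rfl⟩ := hU
    rw [rowSpace_eq_range, finrank_range_liftMap]
  · intro U hU V hV hUV
    simp only [Finset.mem_image] at hU hV
    obtain ⟨X, hX, rfl⟩ := hU
    obtain ⟨Y, hY, rfl⟩ := hV
    have hne : X ≠ Y := fun h => hUV (by rw [h])
    rw [rowSpace_eq_range, rowSpace_eq_range,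
      subspaceDist_eq X Y (Matrix.rank_le_width _)]
    have := hdist X hX Y hY hne
    omega
  · obtain ⟨X, hX, Y, hY, hne, hr⟩ := hmin
    refine ⟨_, Finset.mem_image_of_mem _ hX, _, Finset.mem_image_of_mem _ hY, ?_, ?_⟩
    · intro h
      exact hne (lift_inj (by
        rw [← rowSpace_eq_range, ← rowSpace_eq_range]; exact h))
    · rw [rowSpace_eq_range, rowSpace_eq_range,
        subspaceDist_eq X Y (Matrix.rank_le_width _), hr, h2d]
end

section
/- Wang–Xing–Safavi-Naini (anticode) bound: any set of t-dimensional subspaces of F_q^n with pairwise subspace distance at least 2δ has cardinality at most [n choose t−δ+1]_q / [t choose t−δ+1]_q. -/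
open Module Submodule

/-- The Gaussian binomial coefficient `[n choose r]_q` as a rational number. -/
def gaussBinomQ (q n r : ℕ) : ℚ :=
  ∏ i ∈ Finset.range r, ((q : ℚ) ^ n - (q : ℚ) ^ i) / ((q : ℚ) ^ r - (q : ℚ) ^ i)

section Count

variable {F : Type*} [Field F] [Fintype F]
variable {V : Type*} [AddCommGroup V] [Module F V] [Finite V]

local notation "q" => Fintype.card F

instance finiteSubmodule : Finite (Submodule F V) :=
  Finite.of_injective (fun W => (W : Set V)) SetLike.coe_injective

attribute [local instance] Fintype.ofFinite

noncomputable def fiberEquiv {s : ℕ}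
    (φ : {f : Fin s → V // LinearIndependent F f} → {W : Submodule F V // finrank F W = s})
    (hφ : ∀ f, (φ f).1 = Submodule.span F (Set.range f.1))
    (W : {W : Submodule F V // finrank F W = s}) :
    {f : {f : Fin s → V // LinearIndependent F f} // φ f = W} ≃
      {g : Fin s → W.1 // LinearIndependent F g} where
  toFun := fun ⟨f, hf⟩ => ⟨fun i => ⟨f.1 i, by
      have h : Submodule.span F (Set.range f.1) = W.1 := by rw [← hφ f, hf]
      rw [← h]; exact Submodule.subset_span ⟨i, rfl⟩⟩,
    by
      apply LinearIndependent.of_comp W.1.subtype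
      exact f.2⟩
  invFun := fun g => ⟨⟨fun i => (g.1 i : V),
      g.2.map' W.1.subtype (Submodule.ker_subtype W.1)⟩, by
    have hli : LinearIndependent F (fun i => ((g.1 i : V))) :=
      g.2.map' W.1.subtype (Submodule.ker_subtype W.1)
    have hle : Submodule.span F (Set.range fun i => ((g.1 i : V))) ≤ W.1 := by
      rw [Submodule.span_le]; rintro _ ⟨i, rfl⟩; exact (g.1 i).2
    have hfr : finrank F (Submodule.span F (Set.range fun i => ((g.1 i : V)))) = s := by
      rw [finrank_span_eq_card hli, Fintype.card_fin]
    apply Subtype.ext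
    rw [hφ]
    exact Submodule.eq_of_le_of_finrank_le hle (by rw [hfr, W.2])⟩
  left_inv := fun ⟨f, hf⟩ => by apply Subtype.ext; apply Subtype.ext; rfl
  right_inv := fun g => by apply Subtype.ext; funext i; apply Subtype.ext; rfl

theorem card_subspaces_mul {s : ℕ} (hs : s ≤ finrank F V) :
    Nat.card {W : Submodule F V // finrank F W = s} *
        ∏ i ∈ Finset.range s, (q ^ s - q ^ i)
      = ∏ i ∈ Finset.range s, (q ^ (finrank F V) - q ^ i) := by
  classical
  set φ : {f : Fin s → V // LinearIndependent F f} → {W : Submodule F V // finrank F W = s} :=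
    fun f => ⟨Submodule.span F (Set.range f.1), by
      rw [finrank_span_eq_card f.2, Fintype.card_fin]⟩ with hφdef
  have hφ : ∀ f, (φ f).1 = Submodule.span F (Set.range f.1) := fun f => rfl
  have h1 : Nat.card {f : Fin s → V // LinearIndependent F f}
      = ∏ i : Fin s, (q ^ (finrank F V) - q ^ i.val) := card_linearIndependent hs
  have h2 : Nat.card {f : Fin s → V // LinearIndependent F f}
      = Nat.card {W : Submodule F V // finrank F W = s} *
          ∏ i ∈ Finset.range s, (q ^ s - q ^ i) := by
    rw [← Nat.card_congr (Equiv.sigmaFiberEquiv φ)]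
    rw [Nat.card_eq_fintype_card, Fintype.card_sigma]
    have hfib : ∀ W : {W : Submodule F V // finrank F W = s},
        Fintype.card {f // φ f = W} = ∏ i ∈ Finset.range s, (q ^ s - q ^ i) := by
      intro W
      rw [← Nat.card_eq_fintype_card, Nat.card_congr (fiberEquiv φ hφ W)]
      have := card_linearIndependent (K := F) (V := W.1) (k := s) (by rw [W.2])
      rw [this, W.2, ← Fin.prod_univ_eq_prod_range]
    rw [Finset.sum_congr rfl (fun W _ => hfib W), Finset.sum_const, Finset.card_univ,
      Nat.card_eq_fintype_card, smul_eq_mul]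
  rw [← h2, h1, ← Fin.prod_univ_eq_prod_range]

end Count

attribute [local instance] Fintype.ofFinite

set_option maxHeartbeats 2000000 in
/-- Wang–Xing–Safavi-Naini (anticode) bound: any set of `t`-dimensional subspaces of `F_q^n`
with pairwise subspace distance at least `2δ` has cardinality at most
`[n choose t-δ+1]_q / [t choose t-δ+1]_q`. -/
theorem anticode_bound {F : Type*} [Field F] [Fintype F] {q n t δ : ℕ}
    (hq : q = Fintype.card F) (hδ1 : 1 ≤ δ) (hδt : δ ≤ t) (htn : t ≤ n)
    (A : Finset (Submodule F (Fin n → F)))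
    (hdim : ∀ U ∈ A, Module.finrank F ↥U = t)
    (hdist : ∀ U ∈ A, ∀ V ∈ A, U ≠ V → 2 * δ ≤ subspaceDist U V) :
    (A.card : ℚ) ≤ gaussBinomQ q n (t - δ + 1) / gaussBinomQ q t (t - δ + 1) := by
  classical
  subst hq
  set q := Fintype.card F with hq
  set s := t - δ + 1 with hs
  have hst : s ≤ t := by omega
  have hsn : s ≤ n := by omega
  have hq2 : 2 ≤ q := Fintype.one_lt_card
  have hrnk : finrank F (Fin n → F) = n := by
    rw [Module.finrank_fintype_fun_eq_card, Fintype.card_fin]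
  -- the injection
  set Φ : (Σ U : ↥A, {W : Submodule F ↥(U : Submodule F (Fin n → F)) // finrank F W = s}) →
      {W : Submodule F (Fin n → F) // finrank F W = s} :=
    fun p => ⟨p.2.1.map (p.1 : Submodule F (Fin n → F)).subtype, by
      rw [Submodule.finrank_map_subtype_eq]; exact p.2.2⟩ with hΦ
  have hinj : Function.Injective Φ := by
    rintro ⟨U, W, hW⟩ ⟨U', W', hW'⟩ h
    have hval : W.map (U : Submodule F (Fin n → F)).subtype
        = W'.map (U' : Submodule F (Fin n → F)).subtype := congrArg Subtype.val h
    have hUU : U = U' := by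
      by_contra hne
      have hne' : (U : Submodule F (Fin n → F)) ≠ (U' : Submodule F (Fin n → F)) :=
        fun hcontra => hne (Subtype.ext hcontra)
      have hle1 : W.map (U : Submodule F (Fin n → F)).subtype ≤ (U : Submodule F (Fin n → F)) :=
        Submodule.map_subtype_le _ _
      have hle2 : W.map (U : Submodule F (Fin n → F)).subtype ≤ (U' : Submodule F (Fin n → F)) := by
        rw [hval]; exact Submodule.map_subtype_le _ _
      have hlei : W.map (U : Submodule F (Fin n → F)).subtype
          ≤ (U : Submodule F (Fin n → F)) ⊓ (U' : Submodule F (Fin n → F)) := le_inf hle1 hle2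
      have h1 : finrank F (W.map (U : Submodule F (Fin n → F)).subtype)
          ≤ finrank F ↥((U : Submodule F (Fin n → F)) ⊓ (U' : Submodule F (Fin n → F))) :=
        Submodule.finrank_mono hlei
      have h2 : finrank F (W.map (U : Submodule F (Fin n → F)).subtype) = s := by
        rw [Submodule.finrank_map_subtype_eq]; exact hW
      have h3 : finrank F ↥((U : Submodule F (Fin n → F)) ⊔ (U' : Submodule F (Fin n → F)))
          + finrank F ↥((U : Submodule F (Fin n → F)) ⊓ (U' : Submodule F (Fin n → F)))
          = t + t := by
        rw [Submodule.finrank_sup_add_finrank_inf_eq, hdim _ U.2, hdim _ U'.2]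
      have h4 := hdist _ U.2 _ U'.2 hne'
      unfold subspaceDist at h4
      omega
    subst hUU
    have : W = W' :=
      Submodule.map_injective_of_injective (Submodule.injective_subtype _) hval
    subst this
    rfl
  -- nat counting
  set Ps : ℕ := ∏ i ∈ Finset.range s, (q ^ s - q ^ i) with hPs
  set Pt : ℕ := ∏ i ∈ Finset.range s, (q ^ t - q ^ i) with hPt
  set Pn : ℕ := ∏ i ∈ Finset.range s, (q ^ n - q ^ i) with hPn
  have hPspos : 0 < Ps := Finset.prod_pos fun i hi => by
    have : q ^ i < q ^ s := Nat.pow_lt_pow_right hq2 (Finset.mem_range.mp hi)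
    omega
  have hPtpos : 0 < Pt := Finset.prod_pos fun i hi => by
    have : q ^ i < q ^ t := Nat.pow_lt_pow_right hq2 (lt_of_lt_of_le (Finset.mem_range.mp hi) hst)
    omega
  have hcard_n : Nat.card {W : Submodule F (Fin n → F) // finrank F W = s} * Ps = Pn := by
    have := card_subspaces_mul (F := F) (V := Fin n → F) (s := s) (by rw [hrnk]; exact hsn)
    rwa [hrnk] at this
  have hcard_U : ∀ U : ↥A,
      Nat.card {W : Submodule F ↥(U : Submodule F (Fin n → F)) // finrank F W = s} * Ps = Pt := by
    intro U
    have hfr : finrank F ↥(U : Submodule F (Fin n → F)) = t := hdim _ U.2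
    have := card_subspaces_mul (F := F) (V := ↥(U : Submodule F (Fin n → F))) (s := s)
      (by rw [hfr]; exact hst)
    rwa [hfr] at this
  have hsig : Nat.card (Σ U : ↥A, {W : Submodule F ↥(U : Submodule F (Fin n → F)) //
      finrank F W = s}) * Ps = A.card * Pt := by
    rw [Nat.card_eq_fintype_card, Fintype.card_sigma, Finset.sum_mul]
    have hsummand : ∀ U : ↥A, Fintype.card {W : Submodule F ↥(U : Submodule F (Fin n → F)) //
        finrank F W = s} * Ps = Pt := fun U => by
      rw [← Nat.card_eq_fintype_card]; exact hcard_U U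
    rw [Finset.sum_congr rfl (fun U _ => hsummand U), Finset.sum_const, Finset.card_univ,
      Fintype.card_coe, smul_eq_mul]
  have hle : Nat.card (Σ U : ↥A, {W : Submodule F ↥(U : Submodule F (Fin n → F)) //
      finrank F W = s}) ≤ Nat.card {W : Submodule F (Fin n → F) // finrank F W = s} :=
    Nat.card_le_card_of_injective Φ hinj
  have key : A.card * Pt ≤ Pn := by
    calc A.card * Pt = _ * Ps := hsig.symm
    _ ≤ Nat.card {W : Submodule F (Fin n → F) // finrank F W = s} * Ps :=
      Nat.mul_le_mul_right _ hle
    _ = Pn := hcard_n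
  -- rational arithmetic
  have hcast : ∀ m : ℕ, s ≤ m → ∀ i ∈ Finset.range s,
      ((q : ℚ) ^ m - (q : ℚ) ^ i) = ((q ^ m - q ^ i : ℕ) : ℚ) := by
    intro m hm i hi
    have : q ^ i ≤ q ^ m :=
      Nat.pow_le_pow_right (by omega) (le_trans (le_of_lt (Finset.mem_range.mp hi)) hm)
    push_cast [Nat.cast_sub this]
    ring
  have hgb : ∀ m : ℕ, s ≤ m → gaussBinomQ q m s
      = ((∏ i ∈ Finset.range s, (q ^ m - q ^ i) : ℕ) : ℚ) / (Ps : ℚ) := by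
    intro m hm
    rw [gaussBinomQ, Finset.prod_div_distrib, hPs]
    push_cast
    congr 1
    · exact Finset.prod_congr rfl fun i hi => by
        have : q ^ i ≤ q ^ m :=
          Nat.pow_le_pow_right (by omega) (le_trans (le_of_lt (Finset.mem_range.mp hi)) hm)
        push_cast [Nat.cast_sub this]; ring
    · exact Finset.prod_congr rfl fun i hi => by
        have : q ^ i ≤ q ^ s :=
          Nat.pow_le_pow_right (by omega) (le_of_lt (Finset.mem_range.mp hi))
        push_cast [Nat.cast_sub this]; ring
  have hPsQ : (0 : ℚ) < (Ps : ℚ) := by exact_mod_cast hPspos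
  have hPtQ : (0 : ℚ) < (Pt : ℚ) := by exact_mod_cast hPtpos
  have hrhs : gaussBinomQ q n s / gaussBinomQ q t s = (Pn : ℚ) / (Pt : ℚ) := by
    rw [hgb n hsn, hgb t hst]
    have h1 : (Ps : ℚ) ≠ 0 := ne_of_gt hPsQ
    have h2 : (Pt : ℚ) ≠ 0 := ne_of_gt hPtQ
    rw [div_div_div_eq]
    rw [show ((Pn : ℚ)) = ((∏ i ∈ Finset.range s, (q ^ n - q ^ i) : ℕ) : ℚ) from rfl,
      show ((Pt : ℚ)) = ((∏ i ∈ Finset.range s, (q ^ t - q ^ i) : ℕ) : ℚ) from rfl]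
    rw [mul_comm (((∏ i ∈ Finset.range s, (q ^ n - q ^ i) : ℕ) : ℚ)) ((Ps : ℚ)),
      mul_div_mul_left _ _ h1]
  rw [hrhs, le_div_iff₀ hPtQ]
  exact_mod_cast key
end
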